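/- arXiv:1201.5685 — 9 statements merged into one kernel-verified Lean document; each statement's English description precedes it below -/
import Mathlib

section
/- Let E = EuclideanSpace ℝ (Fin n), let f : E → ℝ be twice continuously differentiable, let ℏ ≠ 0 and m² be real constants, and suppose Δf(x) = 0 and ‖∇f(x)‖² = m² for all x ∈ E. Then ψ = (fun x => Complex.exp (Complex.I * f x / ℏ)) satisfies the Klein–Gordon equation Δψ(x) + (m²/ℏ²) * ψ(x) = 0 for all x. (Paper's Proposition 5.2: conservative geodesic fields satisfy the Klein–Gordon equation; Euclidean metric case.) -/
/-- The Laplacian of a function on `EuclideanSpace ℝ (Fin n)` with values in a real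
normed space: the sum of the second derivatives along the standard orthonormal basis. -/
noncomputable def eLap {n : ℕ} {V : Type*} [NormedAddCommGroup V] [NormedSpace ℝ V]
    (g : EuclideanSpace ℝ (Fin n) → V) (x : EuclideanSpace ℝ (Fin n)) : V :=
  ∑ i, fderiv ℝ (fun y => fderiv ℝ g y (EuclideanSpace.single i 1)) x (EuclideanSpace.single i 1)

/-- Proposition 5.2 (Euclidean case): a conservative geodesic gradient field `u = ∇f`
(`Δf = 0`, `‖∇f‖² = m²`) yields a solution `ψ = e^{i f/ℏ}` of the Klein-Gordon equation
`Δψ + (m²/ℏ²) ψ = 0`. -/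
theorem kleinGordon_of_conservative_geodesic {n : ℕ}
    (f : EuclideanSpace ℝ (Fin n) → ℝ) (hf : ContDiff ℝ 2 f)
    (ℏ m2 : ℝ) (hℏ : ℏ ≠ 0)
    (hlap : ∀ x, eLap f x = 0)
    (hgrad : ∀ x, ‖gradient f x‖ ^ 2 = m2)
    (x : EuclideanSpace ℝ (Fin n)) :
    eLap (fun y => Complex.exp (Complex.I * (f y : ℂ) / (ℏ : ℂ))) x
      + ((m2 / ℏ ^ 2 : ℝ) : ℂ) * Complex.exp (Complex.I * (f x : ℂ) / (ℏ : ℂ)) = 0 := by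
  classical
  set c : ℂ := Complex.I / ℏ with hc
  have harg : ∀ y : EuclideanSpace ℝ (Fin n),
      Complex.I * (f y : ℂ) / (ℏ : ℂ) = c * f y := by
    intro y; rw [hc]; ring
  have hfd : Differentiable ℝ f := hf.differentiable (by norm_num)
  set ψ : EuclideanSpace ℝ (Fin n) → ℂ :=
    fun y => Complex.exp (Complex.I * (f y : ℂ) / (ℏ : ℂ)) with hψdef
  have heqψ : ψ = fun y : EuclideanSpace ℝ (Fin n) => Complex.exp (c * f y) := by
    funext y; rw [hψdef]; simp only [harg]
  -- first derivative of ψ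
  have hψ : ∀ y : EuclideanSpace ℝ (Fin n), HasFDerivAt ψ
      (Complex.exp (c * f y) • (c • (Complex.ofRealCLM.comp (fderiv ℝ f y)))) y := by
    intro y
    have h1 : HasFDerivAt (fun y : EuclideanSpace ℝ (Fin n) => c * (f y : ℂ))
        (c • (Complex.ofRealCLM.comp (fderiv ℝ f y))) y :=
      ((Complex.ofRealCLM.hasFDerivAt.comp y (hfd y).hasFDerivAt)).const_mul c
    rw [heqψ]
    exact h1.cexp
  -- partial derivatives of f
  set g : Fin n → EuclideanSpace ℝ (Fin n) → ℝ :=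
    fun i y => fderiv ℝ f y (EuclideanSpace.single i 1) with hg
  have hgC : ∀ i, Differentiable ℝ (g i) := by
    intro i
    have h1 : ContDiff ℝ 1 (fun y => fderiv ℝ f y) := hf.fderiv_right (by norm_num)
    have h2 := (ContinuousLinearMap.apply ℝ ℝ
      (EuclideanSpace.single i (1 : ℝ))).contDiff.comp h1
    exact h2.differentiable (by norm_num)
  -- the i-th partial derivative of ψ as a function
  have hpart : ∀ i, (fun y : EuclideanSpace ℝ (Fin n) => fderiv ℝ ψ y (EuclideanSpace.single i 1))
      = fun y : EuclideanSpace ℝ (Fin n) => Complex.exp (c * f y) * (c * (g i y : ℂ)) := by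
    intro i; funext y
    rw [(hψ y).fderiv]
    simp [hg, mul_assoc]
  -- second derivative
  have hF : ∀ i, HasFDerivAt
      (fun y : EuclideanSpace ℝ (Fin n) => Complex.exp (c * f y) * (c * (g i y : ℂ)))
      (Complex.exp (c * f x) • (c • (Complex.ofRealCLM.comp (fderiv ℝ (g i) x)))
        + (c * (g i x : ℂ)) • (Complex.exp (c * f x) • (c • (Complex.ofRealCLM.comp (fderiv ℝ f x))))) x := by
    intro i
    have ha : HasFDerivAt (fun y : EuclideanSpace ℝ (Fin n) => Complex.exp (c * f y))
        (Complex.exp (c * f x) • (c • (Complex.ofRealCLM.comp (fderiv ℝ f x)))) x := by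
      have := hψ x; rwa [heqψ] at this
    have hb : HasFDerivAt (fun y : EuclideanSpace ℝ (Fin n) => c * (g i y : ℂ))
        (c • (Complex.ofRealCLM.comp (fderiv ℝ (g i) x))) x :=
      ((Complex.ofRealCLM.hasFDerivAt.comp x (hgC i x).hasFDerivAt)).const_mul c
    exact ha.mul hb
  -- compute eLap ψ x
  have hLap : eLap ψ x = ∑ i, (Complex.exp (c * f x) * (c * (fderiv ℝ (g i) x (EuclideanSpace.single i 1) : ℂ))
      + (c * (g i x : ℂ)) * (Complex.exp (c * f x) * (c * (g i x : ℂ)))) := by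
    unfold eLap
    refine Finset.sum_congr rfl fun i _ => ?_
    rw [hpart i, (hF i).fderiv]
    simp [mul_assoc, mul_comm, mul_left_comm]
    exact Or.inl (Or.inl rfl)
  -- sum of second partials of f vanishes
  have hsum1 : ∑ i, fderiv ℝ (g i) x (EuclideanSpace.single i 1) = 0 := hlap x
  -- sum of squares of partials equals m2
  have hsum2 : ∑ i, (g i x) ^ 2 = m2 := by
    have hgi : ∀ i, g i x = gradient f x i := by
      intro i
      have hdual : fderiv ℝ f x = (InnerProductSpace.toDual ℝ (EuclideanSpace ℝ (Fin n))) (gradient f x) := by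
        rw [gradient]; simp
      rw [hg]
      simp only [hdual, InnerProductSpace.toDual_apply_apply]
      rw [real_inner_comm]
      simp only [EuclideanSpace.inner_single_left, map_one, one_mul]
    rw [← hgrad x]
    rw [@EuclideanSpace.norm_eq ℝ _ (Fin n) _ (gradient f x), Real.sq_sqrt (by positivity)]
    refine Finset.sum_congr rfl fun i _ => ?_
    rw [hgi i]; simp [Real.norm_eq_abs, sq_abs]
  -- put it together
  have hψx : ψ x = Complex.exp (c * f x) := by rw [hψdef]; simp only [harg]
  have hc2 : c ^ 2 = -(1 / (ℏ : ℂ) ^ 2) := by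
    rw [hc]; rw [div_pow, Complex.I_sq]; ring
  calc eLap ψ x + ((m2 / ℏ ^ 2 : ℝ) : ℂ) * ψ x
      = Complex.exp (c * f x) * c * ((∑ i, (fderiv ℝ (g i) x (EuclideanSpace.single i 1) : ℝ) : ℝ) : ℂ)
        + Complex.exp (c * f x) * c ^ 2 * ((∑ i, (g i x) ^ 2 : ℝ) : ℂ)
        + ((m2 / ℏ ^ 2 : ℝ) : ℂ) * Complex.exp (c * f x) := by
        rw [hLap, hψx]
        push_cast
        rw [Finset.mul_sum, Finset.mul_sum, ← Finset.sum_add_distrib]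
        congr 1
        refine Finset.sum_congr rfl fun i _ => ?_
        ring
    _ = 0 := by
        rw [hsum1, hsum2, hc2]
        push_cast
        have hne : ((ℏ : ℂ)) ≠ 0 := by exact_mod_cast hℏ
        field_simp
        ring
end

section
/- Fix ε : Fin n → ℝ with ε i = 1 or ε i = −1 for every i. Let f : EuclideanSpace ℝ (Fin n) → ℝ be twice continuously differentiable, let ℏ ≠ 0 and m² be real constants (m² of arbitrary sign), and suppose Δ_ε f(x) = 0 and Q_ε(f)(x) = m² for all x. Then ψ = (fun x => Complex.exp (Complex.I * f x / ℏ)) satisfies Δ_ε ψ(x) + (m²/ℏ²) * ψ(x) = 0 for all x. (Paper's Proposition 5.2 for a diagonal pseudo-Euclidean metric of arbitrary signature, where the constant kinetic energy m²/2 may be negative.) -/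
/-- The pseudo-Laplacian on `EuclideanSpace ℝ (Fin n)` for the diagonal pseudo-Euclidean
metric with signs `ε`: `Δ_ε g (x) = ∑ i, ε i • (second derivative of g along eᵢ at x)`. -/
noncomputable def pLap {n : ℕ} {V : Type*} [NormedAddCommGroup V] [NormedSpace ℝ V]
    (ε : Fin n → ℝ) (g : EuclideanSpace ℝ (Fin n) → V) (x : EuclideanSpace ℝ (Fin n)) : V :=
  ∑ i, ε i •
    fderiv ℝ (fun y => fderiv ℝ g y (EuclideanSpace.single i 1)) x (EuclideanSpace.single i 1)

/-- The squared pseudo-norm of the differential of a real function: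
`Q_ε(g)(x) = ∑ i, ε i * (∂ᵢ g (x))²`. -/
noncomputable def pQ {n : ℕ} (ε : Fin n → ℝ) (g : EuclideanSpace ℝ (Fin n) → ℝ)
    (x : EuclideanSpace ℝ (Fin n)) : ℝ :=
  ∑ i, ε i * (fderiv ℝ g x (EuclideanSpace.single i 1)) ^ 2

/-- Proposition 5.2 for a diagonal pseudo-Euclidean metric of arbitrary signature:
if `Δ_ε f = 0` and `Q_ε(f) = m²` (with `m²` of arbitrary sign), then `ψ = e^{i f/ℏ}`
satisfies `Δ_ε ψ + (m²/ℏ²) ψ = 0`. -/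
theorem kleinGordon_of_conservative_geodesic_pseudo {n : ℕ} (ε : Fin n → ℝ)
    (hε : ∀ i, ε i = 1 ∨ ε i = -1)
    (f : EuclideanSpace ℝ (Fin n) → ℝ) (hf : ContDiff ℝ 2 f)
    (ℏ m2 : ℝ) (hℏ : ℏ ≠ 0)
    (hlap : ∀ x, pLap ε f x = 0)
    (hQ : ∀ x, pQ ε f x = m2)
    (x : EuclideanSpace ℝ (Fin n)) :
    pLap ε (fun y => Complex.exp (Complex.I * (f y : ℂ) / (ℏ : ℂ))) x
      + ((m2 / ℏ ^ 2 : ℝ) : ℂ) * Complex.exp (Complex.I * (f x : ℂ) / (ℏ : ℂ)) = 0 := by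
  have hf1 : ContDiff ℝ 1 f := hf.of_le one_le_two
  have hfd : Differentiable ℝ f := hf1.differentiable one_ne_zero
  have hfd' : Differentiable ℝ (fderiv ℝ f) :=
    (hf.fderiv_right (m := 1) (by norm_num)).differentiable one_ne_zero
  set c : ℂ := Complex.I / ℏ with hcdef
  have hfun : (fun y : EuclideanSpace ℝ (Fin n) => Complex.exp (Complex.I * (f y : ℂ) / ℏ))
      = fun y => Complex.exp (c * (f y : ℂ)) := by
    funext y; rw [hcdef, div_mul_eq_mul_div]
  set e : Fin n → EuclideanSpace ℝ (Fin n) := fun i => EuclideanSpace.single i 1 with he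
  have hψ : ∀ y, HasFDerivAt (fun z => Complex.exp (c * (f z : ℂ)))
      (Complex.exp (c * f y) • (c • (Complex.ofRealCLM.comp (fderiv ℝ f y)))) y := by
    intro y
    have h1 : HasFDerivAt (fun z : EuclideanSpace ℝ (Fin n) => (f z : ℂ))
        (Complex.ofRealCLM.comp (fderiv ℝ f y)) y :=
      Complex.ofRealCLM.hasFDerivAt.comp y (hfd y).hasFDerivAt
    exact (h1.const_mul c).cexp
  set u : Fin n → EuclideanSpace ℝ (Fin n) → ℝ := fun i y => fderiv ℝ f y (e i) with hu
  have hud : ∀ i, Differentiable ℝ (u i) := fun i =>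
    (ContinuousLinearMap.apply ℝ ℝ (e i)).differentiable.comp hfd'
  have hinner : ∀ i, (fun y => fderiv ℝ (fun z => Complex.exp (c * (f z : ℂ))) y (e i))
      = fun y => Complex.exp (c * f y) * (c * (u i y : ℂ)) := by
    intro i; funext y
    rw [(hψ y).fderiv]
    simp [hu, smul_eq_mul, mul_assoc]
  have hF : ∀ i, HasFDerivAt (fun y => Complex.exp (c * f y) * (c * (u i y : ℂ)))
      (Complex.exp (c * f x) • (c • (Complex.ofRealCLM.comp (fderiv ℝ (u i) x)))
        + (c * u i x) • (Complex.exp (c * f x) • (c • (Complex.ofRealCLM.comp (fderiv ℝ f x))))) x := by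
    intro i
    have h1 : HasFDerivAt (fun y => (u i y : ℂ)) (Complex.ofRealCLM.comp (fderiv ℝ (u i) x)) x :=
      Complex.ofRealCLM.hasFDerivAt.comp x (hud i x).hasFDerivAt
    exact (hψ x).mul (h1.const_mul c)
  -- value of each second partial of ψ
  have hval : ∀ i, fderiv ℝ (fun y => fderiv ℝ (fun z => Complex.exp (c * (f z : ℂ))) y (e i)) x (e i)
      = (c * u i x) * (Complex.exp (c * f x) * (c * u i x))
        + Complex.exp (c * f x) * (c * (fderiv ℝ (u i) x (e i) : ℂ)) := by
    intro i
    rw [hinner i, (hF i).fderiv]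
    simp [hu, smul_eq_mul, mul_assoc]
    ring
  have hlapf : ∑ i, ε i * fderiv ℝ (u i) x (e i) = 0 := by
    have := hlap x
    simpa [pLap, hu, he, smul_eq_mul] using this
  have hQf : ∑ i, ε i * (u i x) ^ 2 = m2 := by
    have := hQ x
    simpa [pQ, hu, he] using this
  rw [hfun, pLap]
  have hsum : ∑ i, ε i • fderiv ℝ
        (fun y => fderiv ℝ (fun z => Complex.exp (c * (f z : ℂ))) y (EuclideanSpace.single i 1)) x
        (EuclideanSpace.single i 1)
      = Complex.exp (c * f x) * (c ^ 2 * ((∑ i, ε i * (u i x) ^ 2 : ℝ) : ℂ)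
          + c * ((∑ i, ε i * fderiv ℝ (u i) x (e i) : ℝ) : ℂ)) := by
    have : ∀ i, ε i • fderiv ℝ
        (fun y => fderiv ℝ (fun z => Complex.exp (c * (f z : ℂ))) y (EuclideanSpace.single i 1)) x
        (EuclideanSpace.single i 1)
        = Complex.exp (c * f x) * (c ^ 2 * ((ε i * (u i x) ^ 2 : ℝ) : ℂ)
            + c * ((ε i * fderiv ℝ (u i) x (e i) : ℝ) : ℂ)) := by
      intro i
      have h := hval i
      rw [he] at h
      rw [h, Complex.real_smul]
      push_cast
      ring
    rw [Finset.sum_congr rfl (fun i _ => this i), ← Finset.mul_sum]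
    congr 1
    push_cast [Finset.mul_sum]
    rw [Finset.sum_add_distrib]
  rw [hsum, hlapf, hQf]
  have hc2 : c ^ 2 = -1 / (ℏ : ℂ) ^ 2 := by
    rw [hcdef, div_pow, Complex.I_sq]
  have hℏ' : (ℏ : ℂ) ≠ 0 := Complex.ofReal_ne_zero.mpr hℏ
  rw [hc2]
  push_cast
  field_simp
  rw [hcdef, show Complex.I / (ℏ : ℂ) * (f x : ℂ) = (f x : ℂ) * Complex.I * (ℏ : ℂ)⁻¹ by ring]
  ring
end

section
/- Let E = EuclideanSpace ℝ (Fin n), let A : E → E be continuously differentiable with div A(x) = 0 for all x (Lorentz gauge), let f : E → ℝ be twice continuously differentiable with Δf(x) = 0 for all x, let ℏ ≠ 0 and m² be real constants, and suppose ‖∇f(x) − A(x)‖² = m² for all x. Then ψ = (fun x => Complex.exp (Complex.I * f x / ℏ)) satisfies the coupled Klein–Gordon equation Δψ(x) − (2·Complex.I/ℏ) * (fderiv ℝ ψ x (A x)) + (1/ℏ²) * (m² − ‖A(x)‖²) * ψ(x) = 0 for all x. (Paper's Theorem 6.1, Euclidean metric case: a Lagrangian solution u = ∇f − A of the Lorentz-force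 Newton equation yields the Klein–Gordon equation coupled to the potential A.) -/
/-- The divergence of a vector field on `EuclideanSpace ℝ (Fin n)`: the trace of its
total derivative. -/
noncomputable def eDiv {n : ℕ}
    (v : EuclideanSpace ℝ (Fin n) → EuclideanSpace ℝ (Fin n))
    (x : EuclideanSpace ℝ (Fin n)) : ℝ :=
  LinearMap.trace ℝ _ (fderiv ℝ v x).toLinearMap

/-- Theorem 6.1 (Euclidean case): if `A` is a C¹ potential in the Lorentz gauge
(`div A = 0`), `f` is C² with `Δf = 0`, and the Lagrangian solution `u = ∇f - A` has
constant squared length `m²`, then `ψ = e^{i f/ℏ}` satisfies the coupled Klein-Gordon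
equation `Δψ - (2i/ℏ) A(ψ) + (1/ℏ²)(m² - ‖A‖²) ψ = 0`. -/
theorem kleinGordon_coupled {n : ℕ}
    (A : EuclideanSpace ℝ (Fin n) → EuclideanSpace ℝ (Fin n)) (hA : ContDiff ℝ 1 A)
    (hgauge : ∀ x, eDiv A x = 0)
    (f : EuclideanSpace ℝ (Fin n) → ℝ) (hf : ContDiff ℝ 2 f)
    (hlap : ∀ x, eLap f x = 0)
    (ℏ m2 : ℝ) (hℏ : ℏ ≠ 0)
    (hconst : ∀ x, ‖gradient f x - A x‖ ^ 2 = m2)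
    (x : EuclideanSpace ℝ (Fin n)) :
    eLap (fun y => Complex.exp (Complex.I * (f y : ℂ) / (ℏ : ℂ))) x
      - (2 * Complex.I / (ℏ : ℂ)) *
          (fderiv ℝ (fun y => Complex.exp (Complex.I * (f y : ℂ) / (ℏ : ℂ))) x (A x))
      + (1 / (ℏ : ℂ) ^ 2) * ((m2 : ℂ) - ((‖A x‖ ^ 2 : ℝ) : ℂ)) *
          Complex.exp (Complex.I * (f x : ℂ) / (ℏ : ℂ)) = 0 := by
  set c : ℂ := Complex.I / ℏ with hc
  have hfd : Differentiable ℝ f := (hf.of_le one_le_two).differentiable one_ne_zero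
  have hf'c : ContDiff ℝ 1 (fderiv ℝ f) := hf.fderiv_right (by norm_num)
  set ψ : EuclideanSpace ℝ (Fin n) → ℂ :=
    fun y => Complex.exp (Complex.I * (f y : ℂ) / (ℏ:ℂ)) with hψ
  -- first derivative of ψ
  have key : ∀ y, HasFDerivAt ψ
      (ψ y • c • (Complex.ofRealCLM.comp (fderiv ℝ f y))) y := by
    intro y
    have h2 : HasFDerivAt (fun z => ((f z : ℝ) : ℂ)) (Complex.ofRealCLM.comp (fderiv ℝ f y)) y :=
      Complex.ofRealCLM.hasFDerivAt.comp y (hfd y).hasFDerivAt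
    have h3 := h2.const_mul c
    have h4 : (fun z => Complex.I * (f z:ℂ) / (ℏ:ℂ)) = fun z => c * (f z : ℂ) := by
      funext z; rw [hc]; ring
    have h5 : HasFDerivAt (fun z => Complex.I * (f z:ℂ)/(ℏ:ℂ))
        (c • (Complex.ofRealCLM.comp (fderiv ℝ f y))) y := h4 ▸ h3
    exact h5.cexp
  have keyap : ∀ y v, fderiv ℝ ψ y v = ψ y * (c * (fderiv ℝ f y v : ℂ)) := by
    intro y v
    rw [(key y).fderiv]
    simp [smul_eq_mul]
  -- second derivative facts
  set f'' := fderiv ℝ (fderiv ℝ f) x with hf''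
  have hDf2 : HasFDerivAt (fderiv ℝ f) f'' x := ((hf'c.differentiable one_ne_zero) x).hasFDerivAt
  have hq : ∀ v : EuclideanSpace ℝ (Fin n), HasFDerivAt (fun y => fderiv ℝ f y v)
      ((ContinuousLinearMap.apply ℝ ℝ v).comp f'') x :=
    fun v => (ContinuousLinearMap.apply ℝ ℝ v).hasFDerivAt.comp x hDf2
  have key2 : ∀ v, fderiv ℝ (fun y => fderiv ℝ ψ y v) x v
      = ψ x * (c * (f'' v v : ℂ)) + ψ x * (c * (fderiv ℝ f x v : ℂ)) ^ 2 := by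
    intro v
    have heq : (fun y => fderiv ℝ ψ y v) = fun y => ψ y * (c * ((fderiv ℝ f y v : ℝ) : ℂ)) := by
      funext y; exact keyap y v
    have hw : HasFDerivAt (fun y => c * ((fderiv ℝ f y v : ℝ):ℂ))
        (c • (Complex.ofRealCLM.comp ((ContinuousLinearMap.apply ℝ ℝ v).comp f''))) x :=
      (Complex.ofRealCLM.hasFDerivAt.comp x (hq v)).const_mul c
    have hprod := (key x).mul hw
    rw [heq, (show HasFDerivAt (fun y => ψ y * (c * ((fderiv ℝ f y v : ℝ) : ℂ))) _ x from hprod).fderiv]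
    simp [smul_eq_mul]
    ring
  -- compute eLap ψ
  have hlapf : ∑ i, f'' (EuclideanSpace.single i 1) (EuclideanSpace.single i 1) = 0 := by
    have h := hlap x
    rw [eLap] at h
    rw [← h]
    exact Finset.sum_congr rfl fun i _ => by rw [(hq _).fderiv]; rfl
  have hgrad : ∀ v, fderiv ℝ f x v = inner ℝ (gradient f x) v := by
    intro v
    rw [((hfd x).hasGradientAt.hasFDerivAt).fderiv]
    simp [InnerProductSpace.toDual_apply_apply]
  have hsumsq : ∑ i, (fderiv ℝ f x (EuclideanSpace.single i 1)) ^ 2 = ‖gradient f x‖ ^ 2 := by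
    rw [← real_inner_self_eq_norm_sq]
    rw [PiLp.inner_apply]
    exact Finset.sum_congr rfl fun i _ => by
      rw [hgrad, real_inner_comm]
      rw [EuclideanSpace.inner_single_left]
      simp [EuclideanSpace.inner_single_left]
  have hLap : eLap ψ x = ψ x * c * (∑ i, f'' (EuclideanSpace.single i 1) (EuclideanSpace.single i 1) : ℝ)
      + ψ x * c ^ 2 * ((‖gradient f x‖ ^ 2 : ℝ) : ℂ) := by
    rw [eLap]
    rw [show (∑ i, fderiv ℝ (fun y => fderiv ℝ ψ y (EuclideanSpace.single i 1)) x (EuclideanSpace.single i 1))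
        = ∑ i, (ψ x * (c * (f'' (EuclideanSpace.single i 1) (EuclideanSpace.single i 1) : ℂ))
          + ψ x * (c * (fderiv ℝ f x (EuclideanSpace.single i 1) : ℂ)) ^ 2) from
      Finset.sum_congr rfl fun i _ => by rw [key2]]
    rw [← hsumsq]
    push_cast
    rw [Finset.sum_add_distrib]
    ring_nf
    simp [Finset.mul_sum]
  -- final assembly
  have hm2 : m2 = ‖gradient f x‖ ^ 2 - 2 * inner ℝ (gradient f x) (A x) + ‖A x‖ ^ 2 := by
    rw [← hconst x, norm_sub_sq_real]
  rw [hLap, hlapf, keyap x (A x), hgrad (A x), hm2, hc]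
  have hI := Complex.I_sq
  have hh : (ℏ:ℂ) ≠ 0 := by exact_mod_cast hℏ
  push_cast
  field_simp
  ring_nf
  rw [Complex.I_sq]
  simp only [hψ, div_eq_mul_inv]
  ring
end

section
/- Fix ε : Fin n → ℝ with ε i = 1 or ε i = −1 for every i. Let A : EuclideanSpace ℝ (Fin n) → (Fin n → ℝ) be a continuously differentiable family of covector components with ∑ᵢ ε i * ∂ᵢ(Aᵢ)(x) = 0 for all x (Lorentz gauge), let f be twice continuously differentiable with Δ_ε f(x) = 0 for all x, let ℏ ≠ 0 and m² be real constants, and suppose ∑ᵢ ε i * (∂ᵢ f(x) − Aᵢ(x))² = m² for all x. Then ψ = (fun x => Complex.exp (Complex.I * f x / ℏ)) satisfies Δ_ε ψ(x) − (2·Complex.I/ℏ) * ∑ᵢ ε i * Aᵢ(x) * ∂ᵢψ(x) + (1/ℏ²) * (m² − ∑ᵢ ε i * Aᵢ(x)²) * ψ(x) = 0 for all x. (Paper's Theorem 6.1 for a diagonal pseudo-Euclidean metric of arbitrary signature.) -/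
/-- Theorem 6.1 for a diagonal pseudo-Euclidean metric of arbitrary signature: if the
covector field `A` is C¹ and in the Lorentz gauge `∑ i, ε i ∂ᵢ Aᵢ = 0`, `f` is C² with
`Δ_ε f = 0`, and `∑ i, ε i (∂ᵢ f - Aᵢ)² = m²`, then `ψ = e^{i f/ℏ}` satisfies
`Δ_ε ψ - (2i/ℏ) ∑ i, ε i Aᵢ ∂ᵢψ + (1/ℏ²)(m² - ∑ i, ε i Aᵢ²) ψ = 0`. -/
theorem kleinGordon_coupled_pseudo {n : ℕ} (ε : Fin n → ℝ)
    (hε : ∀ i, ε i = 1 ∨ ε i = -1)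
    (A : EuclideanSpace ℝ (Fin n) → (Fin n → ℝ)) (hA : ContDiff ℝ 1 A)
    (hgauge : ∀ x, ∑ i, ε i *
      fderiv ℝ (fun y => A y i) x (EuclideanSpace.single i 1) = 0)
    (f : EuclideanSpace ℝ (Fin n) → ℝ) (hf : ContDiff ℝ 2 f)
    (hlap : ∀ x, pLap ε f x = 0)
    (ℏ m2 : ℝ) (hℏ : ℏ ≠ 0)
    (hconst : ∀ x, ∑ i, ε i *
      (fderiv ℝ f x (EuclideanSpace.single i 1) - A x i) ^ 2 = m2)
    (x : EuclideanSpace ℝ (Fin n)) :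
    pLap ε (fun y => Complex.exp (Complex.I * (f y : ℂ) / (ℏ : ℂ))) x
      - (2 * Complex.I / (ℏ : ℂ)) *
          ∑ i, ((ε i : ℝ) : ℂ) * ((A x i : ℝ) : ℂ) *
            (fderiv ℝ (fun y => Complex.exp (Complex.I * (f y : ℂ) / (ℏ : ℂ))) x
              (EuclideanSpace.single i 1))
      + (1 / (ℏ : ℂ) ^ 2) * ((m2 : ℂ) - ((∑ i, ε i * (A x i) ^ 2 : ℝ) : ℂ)) *
          Complex.exp (Complex.I * (f x : ℂ) / (ℏ : ℂ)) = 0 := by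
  classical
  set e : Fin n → EuclideanSpace ℝ (Fin n) := fun i => EuclideanSpace.single i 1 with he
  set c : ℂ := Complex.I / ℏ with hc
  have hexp : ∀ y : EuclideanSpace ℝ (Fin n),
      Complex.I * (f y : ℂ) / ℏ = c * (f y : ℂ) := fun y => by rw [hc]; ring
  set ψ : EuclideanSpace ℝ (Fin n) → ℂ :=
    fun y => Complex.exp (Complex.I * (f y : ℂ) / ℏ) with hψdef
  have hfd : Differentiable ℝ f := hf.differentiable two_ne_zero
  -- first derivative of ψ
  have hψd : ∀ y, HasFDerivAt ψ
      (ψ y • (c • (Complex.ofRealCLM.comp (fderiv ℝ f y)))) y := by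
    intro y
    have h1 : HasFDerivAt (fun y => ((f y : ℝ) : ℂ))
        (Complex.ofRealCLM.comp (fderiv ℝ f y)) y :=
      Complex.ofRealCLM.hasFDerivAt.comp y (hfd y).hasFDerivAt
    have h2 := (h1.const_mul c).cexp
    simp only [hψdef, hexp]
    exact h2
  have hψd' : ∀ y v, fderiv ℝ ψ y v = ψ y * (c * (fderiv ℝ f y v : ℂ)) := by
    intro y v
    rw [(hψd y).fderiv]
    simp [smul_smul, mul_assoc]
  -- second derivatives of ψ
  set g : Fin n → ℝ := fun i => fderiv ℝ f x (e i) with hg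
  set h : Fin n → ℝ := fun i => fderiv ℝ (fun y => fderiv ℝ f y (e i)) x (e i) with hh
  have key : ∀ i, fderiv ℝ (fun y => fderiv ℝ ψ y (e i)) x (e i)
      = ψ x * (c ^ 2 * (g i : ℂ) ^ 2 + c * (h i : ℂ)) := by
    intro i
    have hgC : ContDiff ℝ 1 (fun y => fderiv ℝ f y (e i)) :=
      (hf.fderiv_right (le_refl 2)).clm_apply contDiff_const
    have hgd : HasFDerivAt (fun y => fderiv ℝ f y (e i))
        (fderiv ℝ (fun y => fderiv ℝ f y (e i)) x) x :=
      (hgC.differentiable one_ne_zero x).hasFDerivAt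
    have h2 : HasFDerivAt (fun y => c * ((fderiv ℝ f y (e i) : ℝ) : ℂ))
        (c • (Complex.ofRealCLM.comp (fderiv ℝ (fun y => fderiv ℝ f y (e i)) x))) x :=
      (Complex.ofRealCLM.hasFDerivAt.comp x hgd).const_mul c
    have h3 := (hψd x).mul h2
    have hfun : (fun y => fderiv ℝ ψ y (e i))
        = fun y => ψ y * (c * ((fderiv ℝ f y (e i) : ℝ) : ℂ)) :=
      funext fun y => hψd' y (e i)
    rw [hfun, show (fun y => ψ y * (c * ((fderiv ℝ f y (e i) : ℝ) : ℂ))) = (ψ * fun y => c * ((fderiv ℝ f y (e i) : ℝ) : ℂ)) from rfl, h3.fderiv]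
    simp only [ContinuousLinearMap.add_apply, ContinuousLinearMap.smul_apply,
      ContinuousLinearMap.coe_comp', Function.comp_apply, Complex.ofRealCLM_apply,
      smul_eq_mul, ← hg, ← hh]
    ring
  -- pLap of ψ
  have hS : pLap ε ψ x = ψ x * (c ^ 2 * ((∑ i, ε i * (g i) ^ 2 : ℝ) : ℂ)) := by
    have h0 : ((∑ i, ε i * h i : ℝ) : ℂ) = 0 := by
      have := hlap x
      simp only [pLap, smul_eq_mul, ← he, ← hh] at this
      rw [this, Complex.ofReal_zero]
    simp only [pLap, show ∀ i, EuclideanSpace.single i (1:ℝ) = e i from fun i => rfl, key]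
    push_cast
    push_cast at h0
    calc ∑ i, (ε i : ℝ) • (ψ x * (c ^ 2 * (g i : ℂ) ^ 2 + c * (h i : ℂ)))
        = (ψ x * c ^ 2) * (∑ i, ((ε i : ℝ) : ℂ) * (g i : ℂ) ^ 2)
          + (ψ x * c) * (∑ i, ((ε i : ℝ) : ℂ) * (h i : ℂ)) := by
          rw [Finset.mul_sum, Finset.mul_sum, ← Finset.sum_add_distrib]
          refine Finset.sum_congr rfl fun i _ => ?_
          rw [Complex.real_smul]
          ring
      _ = ψ x * (c ^ 2 * (∑ i, ((ε i : ℝ) : ℂ) * (g i : ℂ) ^ 2)) := by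
          rw [h0]; ring
  -- the constants
  have hm : (m2 : ℂ) = ((∑ i, ε i * (g i) ^ 2 : ℝ) : ℂ)
      - 2 * ((∑ i, ε i * A x i * g i : ℝ) : ℂ) + ((∑ i, ε i * (A x i) ^ 2 : ℝ) : ℂ) := by
    have hr : m2 = (∑ i, ε i * (g i) ^ 2) - 2 * (∑ i, ε i * A x i * g i)
        + (∑ i, ε i * (A x i) ^ 2) := by
      rw [← hconst x]
      rw [Finset.mul_sum, ← Finset.sum_sub_distrib, ← Finset.sum_add_distrib]
      refine Finset.sum_congr rfl fun i _ => ?_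
      ring
    rw [hr]; push_cast; ring
  -- the middle sum
  have hmid : ∑ i, ((ε i : ℝ) : ℂ) * ((A x i : ℝ) : ℂ) * (fderiv ℝ ψ x (e i))
      = ψ x * c * ((∑ i, ε i * A x i * g i : ℝ) : ℂ) := by
    push_cast
    rw [Finset.mul_sum]
    refine Finset.sum_congr rfl fun i _ => ?_
    rw [hψd' x (e i)]
    ring
  -- finish
  have hψx : ψ x = Complex.exp (Complex.I * (f x : ℂ) / ℏ) := rfl
  have he' : ∀ i, EuclideanSpace.single i (1:ℝ) = e i := fun i => rfl
  simp only [he']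
  rw [hS, hmid, ← hψx, hm]
  set S : ℂ := ((∑ i, ε i * (g i) ^ 2 : ℝ) : ℂ)
  set T : ℂ := ((∑ i, ε i * A x i * g i : ℝ) : ℂ)
  set SA : ℂ := ((∑ i, ε i * (A x i) ^ 2 : ℝ) : ℂ)
  have hℏ' : (ℏ : ℂ) ≠ 0 := Complex.ofReal_ne_zero.mpr hℏ
  rw [hc]
  field_simp
  ring_nf
  simp [Complex.I_sq]
end

section
/- Let E = EuclideanSpace ℝ (Fin n), let A : E → E be continuous, f : E → ℝ twice continuously differentiable, ℏ ≠ 0 and m² real constants, and suppose ψ = (fun x => Complex.exp (Complex.I * f x / ℏ)) satisfies Δψ(x) − (2·Complex.I/ℏ) * (fderiv ℝ ψ x (A x)) + (1/ℏ²) * (m² − ‖A(x)‖²) * ψ(x) = 0 for all x. Then Δf(x) = 0 and ‖∇f(x) − A(x)‖² = m² for all x. (Converse remark at the end of Section 6: for real f, the Klein–Gordon equation forces the vector field u = ∇f − A to be divergence-free and of constant squared length m².) -/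
/-- Converse remark at the end of Section 6: if `ψ = e^{i f/ℏ}` (with `f` real and C²)
satisfies the coupled Klein-Gordon equation for a continuous potential `A`, then `Δf = 0`
and `‖∇f - A‖² = m²`. -/
theorem kleinGordon_converse {n : ℕ}
    (A : EuclideanSpace ℝ (Fin n) → EuclideanSpace ℝ (Fin n)) (hA : Continuous A)
    (f : EuclideanSpace ℝ (Fin n) → ℝ) (hf : ContDiff ℝ 2 f)
    (ℏ m2 : ℝ) (hℏ : ℏ ≠ 0)
    (hKG : ∀ x,
      eLap (fun y => Complex.exp (Complex.I * (f y : ℂ) / (ℏ : ℂ))) x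
        - (2 * Complex.I / (ℏ : ℂ)) *
            (fderiv ℝ (fun y => Complex.exp (Complex.I * (f y : ℂ) / (ℏ : ℂ))) x (A x))
        + (1 / (ℏ : ℂ) ^ 2) * ((m2 : ℂ) - ((‖A x‖ ^ 2 : ℝ) : ℂ)) *
            Complex.exp (Complex.I * (f x : ℂ) / (ℏ : ℂ)) = 0) :
    ∀ x, eLap f x = 0 ∧ ‖gradient f x - A x‖ ^ 2 = m2 := by
  intro x
  set ψ : EuclideanSpace ℝ (Fin n) → ℂ := fun y => Complex.exp (Complex.I * (f y : ℂ) / (ℏ : ℂ)) with hψdef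
  set c : ℂ := Complex.I / ℏ with hc
  have hfd : Differentiable ℝ f := hf.differentiable two_ne_zero
  have hψeq : ∀ y, ψ y = Complex.exp (c * (f y : ℂ)) := by
    intro y; show Complex.exp (Complex.I * (f y : ℂ) / (ℏ : ℂ)) = _; rw [hc, mul_div_right_comm]
  have hψd : ∀ y, HasFDerivAt ψ ((ψ y * c) • (Complex.ofRealCLM.comp (fderiv ℝ f y))) y := by
    intro y
    have h1 : HasFDerivAt (fun z => c * (f z : ℂ)) (c • (Complex.ofRealCLM.comp (fderiv ℝ f y))) y :=
      (Complex.ofRealCLM.hasFDerivAt.comp y (hfd y).hasFDerivAt).const_mul c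
    have h2 := h1.cexp
    rw [smul_smul, ← hψeq y] at h2
    exact h2.congr_of_eventuallyEq (Filter.Eventually.of_forall fun z => hψeq z)
  have key : ∀ y v, fderiv ℝ ψ y v = (ψ y * c) * (fderiv ℝ f y v : ℂ) := by
    intro y v
    rw [(hψd y).fderiv]
    simp [smul_eq_mul]
  -- second derivatives
  have hf1 : ContDiff ℝ 1 (fun y => fderiv ℝ f y) := hf.fderiv_right (by norm_num)
  have hf1d : Differentiable ℝ (fun y => fderiv ℝ f y) := hf1.differentiable one_ne_zero
  set e : Fin n → EuclideanSpace ℝ (Fin n) := fun i => EuclideanSpace.single i (1 : ℝ) with he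
  have hg2 : ∀ i : Fin n, HasFDerivAt (fun y => fderiv ℝ f y (e i))
      ((fderiv ℝ (fderiv ℝ f) x).flip (e i)) x := by
    intro i
    have h := ((hf1d x).hasFDerivAt).clm_apply (hasFDerivAt_const (e i) x)
    simpa using h
  have hD2 : ∀ i : Fin n, fderiv ℝ (fun y => fderiv ℝ f y (e i)) x (e i)
      = fderiv ℝ (fderiv ℝ f) x (e i) (e i) := by
    intro i; rw [(hg2 i).fderiv]; simp
  have hterm : ∀ i : Fin n, fderiv ℝ (fun y => fderiv ℝ ψ y (e i)) x (e i)
      = ψ x * c * (fderiv ℝ (fderiv ℝ f) x (e i) (e i) : ℂ)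
        + ψ x * c ^ 2 * (fderiv ℝ f x (e i) : ℂ) ^ 2 := by
    intro i
    have ha : HasFDerivAt (fun y => ψ y * c)
        (c • ((ψ x * c) • (Complex.ofRealCLM.comp (fderiv ℝ f x)))) x := (hψd x).mul_const c
    have hb : HasFDerivAt (fun y => ((fderiv ℝ f y (e i) : ℝ) : ℂ))
        (Complex.ofRealCLM.comp ((fderiv ℝ (fderiv ℝ f) x).flip (e i))) x :=
      Complex.ofRealCLM.hasFDerivAt.comp x (hg2 i)
    have hprod := ha.mul hb
    have hfun : (fun y => fderiv ℝ ψ y (e i)) = fun y => (ψ y * c) * ((fderiv ℝ f y (e i) : ℝ) : ℂ) :=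
      funext fun y => key y (e i)
    rw [hfun, show (fun y => (ψ y * c) * ((fderiv ℝ f y (e i) : ℝ) : ℂ)) = ((fun y => ψ y * c) * fun y => ((fderiv ℝ f y (e i) : ℝ) : ℂ)) from rfl, hprod.fderiv]
    simp [smul_eq_mul]
    ring
  -- Laplacian of ψ
  set L : ℝ := eLap f x with hL
  set S : ℝ := ∑ i, (fderiv ℝ f x (e i)) ^ 2 with hS
  have hLap : eLap ψ x = ψ x * c * (L : ℂ) + ψ x * c ^ 2 * (S : ℂ) := by
    show (∑ i, fderiv ℝ (fun y => fderiv ℝ ψ y (e i)) x (e i)) = _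
    rw [Finset.sum_congr rfl fun i _ => hterm i, Finset.sum_add_distrib,
      ← Finset.mul_sum, ← Finset.mul_sum]
    have h1 : (∑ i, (fderiv ℝ (fderiv ℝ f) x (e i) (e i) : ℂ)) = (L : ℂ) := by
      have hL' : L = ∑ i, fderiv ℝ (fderiv ℝ f) x (e i) (e i) :=
        Finset.sum_congr rfl fun i _ => hD2 i
      rw [hL']
      push_cast
      rfl
    have h2 : (∑ i, ((fderiv ℝ f x (e i) : ℂ)) ^ 2) = (S : ℂ) := by
      rw [hS]; push_cast; rfl
    rw [h1, h2]
  -- gradient facts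
  set G : EuclideanSpace ℝ (Fin n) := gradient f x with hG
  have hgrad : ∀ v, fderiv ℝ f x v = inner ℝ G v := by
    intro v
    have := (hfd x).hasGradientAt
    rw [hasGradientAt_iff_hasFDerivAt] at this
    rw [this.fderiv]
    simp [InnerProductSpace.toDual_apply_apply, hG]
  have hSvalue : S = ‖G‖ ^ 2 := by
    rw [hS]
    have : ∀ i, fderiv ℝ f x (e i) = G i := by
      intro i
      rw [hgrad]
      simp [he, EuclideanSpace.inner_single_right, real_inner_comm]
    rw [Finset.sum_congr rfl fun i _ => by rw [this i]]
    rw [← real_inner_self_eq_norm_sq]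
    rw [PiLp.inner_apply]; simp [sq]
  set P : ℝ := inner ℝ G (A x) with hP
  have hPval : fderiv ℝ f x (A x) = P := hgrad (A x)
  -- reduce KG equation
  have hKGx := hKG x
  rw [show Complex.exp (Complex.I * (f x : ℂ) / (ℏ : ℂ)) = ψ x from rfl] at hKGx
  rw [hLap, key x (A x), hPval] at hKGx
  have hψne : ψ x ≠ 0 := Complex.exp_ne_zero _
  have hℏc : (ℏ : ℂ) ≠ 0 := Complex.ofReal_ne_zero.mpr hℏ
  rw [hc] at hKGx
  field_simp at hKGx
  have h3 : (ψ x * (ℏ:ℂ)^5) * ((ℏ:ℂ) * (L:ℂ) * Complex.I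
      + (-(S:ℂ) + 2*(P:ℂ) + (m2:ℂ) - (‖A x‖:ℂ)^2)) = 0 := by
    rw [Complex.ofReal_pow] at hKGx
    linear_combination (ℏ:ℂ)^5 * hKGx + ψ x * (ℏ:ℂ)^5 * (2*(P:ℂ) - (S:ℂ)) * Complex.I_sq
  have heq : (ℏ:ℂ) * (L:ℂ) * Complex.I + (-(S:ℂ) + 2*(P:ℂ) + (m2:ℂ) - (‖A x‖:ℂ)^2) = 0 :=
    (mul_eq_zero.mp h3).resolve_left (by simp [hψne, hℏc])
  have heq2 : ((ℏ * L : ℝ):ℂ) * Complex.I + ((-S + 2*P + m2 - ‖A x‖^2 : ℝ):ℂ) = 0 := by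
    push_cast
    linear_combination heq
  have him : ℏ * L = 0 := by simpa [← Complex.ofReal_pow] using congrArg Complex.im heq2
  have hre : -S + 2*P + m2 - ‖A x‖^2 = 0 := by simpa [← Complex.ofReal_pow] using congrArg Complex.re heq2
  constructor
  · rcases mul_eq_zero.mp him with h | h
    · exact absurd h hℏ
    · exact h
  · have hnorm : ‖G - A x‖ ^ 2 = ‖G‖ ^ 2 - 2 * P + ‖A x‖ ^ 2 := by
      rw [hP, norm_sub_sq_real]
    rw [hnorm, ← hSvalue]
    linarith
end

section
/- Let E = EuclideanSpace ℝ (Fin n), let f : E → ℝ be twice continuously differentiable, let A : E → E be differentiable, and set u = (fun x => ∇f(x) − A(x)). Suppose u satisfies the Lorentz-force Newton equation: for all x, (fderiv ℝ u x) (u x) = (fderiv ℝ A x).adjoint (u x) − (fderiv ℝ A x) (u x). Then the kinetic energy is constant: there exists a real constant c such that ‖u(x)‖² = c for all x. (Paper's Lemma of Section 4: Lagrangian solutions of the Lorentz equation have constant kinetic energy; Euclidean metric case.) -/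
open InnerProductSpace

/-- Lemma of Section 4 (Euclidean case): a Lagrangian solution `u = ∇f - A` of the
Lorentz-force Newton equation has constant kinetic energy: `‖u‖²` is constant. -/
theorem lagrangian_solution_constant_kinetic_energy {n : ℕ}
    (f : EuclideanSpace ℝ (Fin n) → ℝ) (hf : ContDiff ℝ 2 f)
    (A : EuclideanSpace ℝ (Fin n) → EuclideanSpace ℝ (Fin n)) (hA : Differentiable ℝ A)
    (u : EuclideanSpace ℝ (Fin n) → EuclideanSpace ℝ (Fin n))
    (hu : ∀ x, u x = gradient f x - A x)
    (hNewton : ∀ x, (fderiv ℝ u x) (u x) =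
      (fderiv ℝ A x).adjoint (u x) - (fderiv ℝ A x) (u x)) :
    ∃ c : ℝ, ∀ x, ‖u x‖ ^ 2 = c := by
  classical
  have hE : True := trivial
  -- differentiability of fderiv f
  have hf1 : Differentiable ℝ (fderiv ℝ f) := by
    have : ContDiff ℝ 1 (fderiv ℝ f) := hf.fderiv_right (by norm_num)
    exact this.differentiable one_ne_zero
  -- Hessian as a map E →L E
  set H : EuclideanSpace ℝ (Fin n) → EuclideanSpace ℝ (Fin n) →L[ℝ] EuclideanSpace ℝ (Fin n) := fun x =>
    ((toDual ℝ (EuclideanSpace ℝ (Fin n))).symm.toContinuousLinearEquiv.toContinuousLinearMap).comp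
      (fderiv ℝ (fderiv ℝ f) x) with hH
  have hgrad : ∀ x, HasFDerivAt (gradient f) (H x) x := by
    intro x
    have h1 : HasFDerivAt (fderiv ℝ f) (fderiv ℝ (fderiv ℝ f) x) x :=
      (hf1 x).hasFDerivAt
    have h2 := ((toDual ℝ (EuclideanSpace ℝ (Fin n))).symm.toContinuousLinearEquiv.toContinuousLinearMap
      |>.hasFDerivAt (x := fderiv ℝ f x)).comp x h1
    exact h2
  -- derivative of u
  have hueq : u = fun x => gradient f x - A x := funext hu
  have hu' : ∀ x, HasFDerivAt u (H x - fderiv ℝ A x) x := by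
    intro x
    rw [hueq]
    exact (hgrad x).sub (hA x).hasFDerivAt
  have hfderivu : ∀ x, fderiv ℝ u x = H x - fderiv ℝ A x := fun x => (hu' x).fderiv
  -- Hessian symmetry: ⟪H x v, w⟫ = ⟪H x w, v⟫
  have hHsymm : ∀ x v w, ⟪H x v, w⟫_ℝ = ⟪H x w, v⟫_ℝ := by
    intro x v w
    have hsym : fderiv ℝ (fderiv ℝ f) x v w = fderiv ℝ (fderiv ℝ f) x w v :=
      second_derivative_symmetric (fun y => ((hf.differentiable (by norm_num)) y).hasFDerivAt)
        (hf1 x).hasFDerivAt v w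
    simpa [hH, toDual_symm_apply] using hsym
  -- key: ⟪fderiv u x v, u x⟫ = 0
  have hkey : ∀ x v, ⟪(H x - fderiv ℝ A x) v, u x⟫_ℝ = 0 := by
    intro x v
    have hN := hNewton x
    rw [hfderivu x] at hN
    have hHu : H x (u x) = (fderiv ℝ A x).adjoint (u x) := by
      have := hN
      simp only [ContinuousLinearMap.sub_apply] at this
      have h' := congrArg (fun z => z + fderiv ℝ A x (u x)) this
      simpa [sub_add_cancel] using h'
    have h1 : ⟪H x v, u x⟫_ℝ = ⟪(fderiv ℝ A x).adjoint (u x), v⟫_ℝ := by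
      rw [hHsymm x v (u x), hHu]
    have h2 : ⟪fderiv ℝ A x v, u x⟫_ℝ = ⟪(fderiv ℝ A x).adjoint (u x), v⟫_ℝ := by
      rw [ContinuousLinearMap.adjoint_inner_left]
      exact real_inner_comm _ _
    simp only [ContinuousLinearMap.sub_apply, inner_sub_left, h1, h2, sub_self]
  -- the squared norm has zero derivative
  set g : EuclideanSpace ℝ (Fin n) → ℝ := fun x => ⟪u x, u x⟫_ℝ with hg
  have hgderiv : ∀ x, HasFDerivAt g (0 : EuclideanSpace ℝ (Fin n) →L[ℝ] ℝ) x := by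
    intro x
    have h := HasFDerivAt.inner (𝕜 := ℝ) (hu' x) (hu' x)
    refine h.congr_fderiv (Eq.symm ?_)
    ext v
    have := hkey x v
    simp only [ContinuousLinearMap.zero_apply, ContinuousLinearMap.comp_apply,
      ContinuousLinearMap.prod_apply, fderivInnerCLM_apply]
    have h0 : ⟪u x, (H x - fderiv ℝ A x) v⟫_ℝ = 0 := by
      rw [real_inner_comm]; exact hkey x v
    linarith [hkey x v, h0]
  have hconst : ∀ x, g x = g 0 := by
    intro x
    exact is_const_of_fderiv_eq_zero (fun y => (hgderiv y).differentiableAt)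
      (fun y => (hgderiv y).fderiv) x 0
  refine ⟨g 0, fun x => ?_⟩
  rw [← real_inner_self_eq_norm_sq]
  exact hconst x
end

section
/- Let E = EuclideanSpace ℝ (Fin n) and let f : E → ℝ be twice continuously differentiable such that the gradient field u = ∇f is geodesic, i.e. (fderiv ℝ (fun x => ∇f(x)) x) (∇f(x)) = 0 for all x. Then there exists a real constant c such that ‖∇f(x)‖² = c for all x. (Lagrangian solutions of the free Newton equation, Section 5: geodesic gradient fields have constant kinetic energy.) -/
open InnerProductSpace
open scoped RealInnerProductSpace

/-- Section 5: a geodesic gradient field `u = ∇f` (i.e. `(∇f · ∇)∇f = 0`) has constant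
kinetic energy: `‖∇f‖²` is constant. -/
theorem geodesic_gradient_constant_kinetic_energy {n : ℕ}
    (f : EuclideanSpace ℝ (Fin n) → ℝ) (hf : ContDiff ℝ 2 f)
    (hgeo : ∀ x, (fderiv ℝ (fun y => gradient f y) x) (gradient f x) = 0) :
    ∃ c : ℝ, ∀ x, ‖gradient f x‖ ^ 2 = c := by
  have hdf : Differentiable ℝ f := hf.differentiable two_ne_zero
  have hf' : ContDiff ℝ 1 (fderiv ℝ f) := hf.fderiv_right (le_refl 2)
  set u : EuclideanSpace ℝ (Fin n) → EuclideanSpace ℝ (Fin n) :=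
    fun y => gradient f y with hu
  set L : (EuclideanSpace ℝ (Fin n) →L[ℝ] ℝ) ≃L[ℝ] EuclideanSpace ℝ (Fin n) :=
    (toDual ℝ (EuclideanSpace ℝ (Fin n))).symm.toContinuousLinearEquiv with hL
  have hucomp : ∀ y, u y = L (fderiv ℝ f y) := fun y => rfl
  have hHat : ∀ x, HasFDerivAt u
      ((L : (EuclideanSpace ℝ (Fin n) →L[ℝ] ℝ) →L[ℝ] EuclideanSpace ℝ (Fin n)).comp
        (fderiv ℝ (fderiv ℝ f) x)) x := by
    intro x
    have hd2 : DifferentiableAt ℝ (fderiv ℝ f) x := hf'.differentiable one_ne_zero x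
    exact ((L : (EuclideanSpace ℝ (Fin n) →L[ℝ] ℝ) →L[ℝ]
      EuclideanSpace ℝ (Fin n)).hasFDerivAt.comp x hd2.hasFDerivAt :)
  have hdu : Differentiable ℝ u := fun x => (hHat x).differentiableAt
  have hfd : ∀ x, fderiv ℝ u x
      = ((L : (EuclideanSpace ℝ (Fin n) →L[ℝ] ℝ) →L[ℝ] EuclideanSpace ℝ (Fin n)).comp
        (fderiv ℝ (fderiv ℝ f) x)) := fun x => (hHat x).fderiv
  have key : ∀ x v w, ⟪fderiv ℝ u x v, w⟫_ℝ = (fderiv ℝ (fderiv ℝ f) x) v w := by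
    intro x v w
    rw [hfd]
    show ⟪(toDual ℝ (EuclideanSpace ℝ (Fin n))).symm ((fderiv ℝ (fderiv ℝ f) x) v), w⟫_ℝ = _
    rw [← InnerProductSpace.toDual_apply_apply,
      (toDual ℝ (EuclideanSpace ℝ (Fin n))).apply_symm_apply]
  have hsymm : ∀ x v w, ⟪fderiv ℝ u x v, w⟫_ℝ = ⟪fderiv ℝ u x w, v⟫_ℝ := by
    intro x v w
    rw [key, key]
    exact second_derivative_symmetric (fun y => (hdf y).hasFDerivAt)
      ((hf'.differentiable one_ne_zero x).hasFDerivAt) v w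
  have hgzero : ∀ x, HasFDerivAt (fun y => ⟪u y, u y⟫_ℝ) (0 : _ →L[ℝ] ℝ) x := by
    intro x
    have h : HasFDerivAt (fun y => ⟪u y, u y⟫_ℝ) ((fderivInnerCLM ℝ (u x, u x)).comp
        ((fderiv ℝ u x).prod (fderiv ℝ u x))) x :=
      HasFDerivAt.inner ℝ (hdu x).hasFDerivAt (hdu x).hasFDerivAt
    convert h using 1
    · rfl
    ext v
    have h1 : ⟪fderiv ℝ u x v, u x⟫_ℝ = 0 := by
      rw [hsymm]
      have h0 : fderiv ℝ u x (u x) = 0 := hgeo x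
      rw [h0, inner_zero_left]
    simp only [ContinuousLinearMap.zero_apply, ContinuousLinearMap.comp_apply,
      ContinuousLinearMap.prod_apply, fderivInnerCLM_apply]
    have h2 : ⟪u x, (fderiv ℝ u x) v⟫_ℝ = 0 := by rw [real_inner_comm]; exact h1
    simp [h1, h2]
  refine ⟨⟪u 0, u 0⟫_ℝ, fun x => ?_⟩
  have hc : ⟪u x, u x⟫_ℝ = ⟪u 0, u 0⟫_ℝ :=
    is_const_of_fderiv_eq_zero (f := fun y => ⟪u y, u y⟫_ℝ)
      (fun y => (hgzero y).differentiableAt) (fun y => (hgzero y).fderiv) x 0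
  rw [← hc]
  exact (real_inner_self_eq_norm_sq (u x)).symm
end

section
/- Let E = EuclideanSpace ℝ (Fin n), let A : E → E be differentiable, and let u : E → E be a differentiable vector field satisfying the Lorentz-force Newton equation: for all x, (fderiv ℝ u x) (u x) = (fderiv ℝ A x).adjoint (u x) − (fderiv ℝ A x) (u x). Then the kinetic energy T(u) = (fun x => ‖u(x)‖²/2) is a first integral of u: for all x, fderiv ℝ (fun x => ‖u(x)‖²/2) x (u x) = 0. (Claim following equation (9) in Section 4: the kinetic energy is a first integral of any field solution of the Lorentz equation.) -/
/-- Section 4, claim following equation (9): for a field solution `u` of the Lorentz-force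
Newton equation, the kinetic energy `T(u) = ‖u‖²/2` is a first integral of `u`. -/
theorem kinetic_energy_first_integral {n : ℕ}
    (A : EuclideanSpace ℝ (Fin n) → EuclideanSpace ℝ (Fin n)) (hA : Differentiable ℝ A)
    (u : EuclideanSpace ℝ (Fin n) → EuclideanSpace ℝ (Fin n)) (hu : Differentiable ℝ u)
    (hNewton : ∀ x, (fderiv ℝ u x) (u x) =
      (fderiv ℝ A x).adjoint (u x) - (fderiv ℝ A x) (u x)) :
    ∀ x, fderiv ℝ (fun y => ‖u y‖ ^ 2 / 2) x (u x) = 0 := by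
  intro x
  have h1 : (fun y => ‖u y‖ ^ 2 / 2) = fun y => (1/2 : ℝ) * (inner ℝ (u y) (u y) : ℝ) := by
    funext y
    rw [real_inner_self_eq_norm_sq]; ring
  rw [h1]
  have hd : DifferentiableAt ℝ (fun y => (inner ℝ (u y) (u y) : ℝ)) x :=
    (hu.differentiableAt.inner ℝ hu.differentiableAt)
  rw [fderiv_const_mul hd, ContinuousLinearMap.smul_apply]
  rw [fderiv_inner_apply ℝ hu.differentiableAt hu.differentiableAt, hNewton x]
  simp only [inner_sub_right, inner_sub_left, ContinuousLinearMap.adjoint_inner_left,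
    ContinuousLinearMap.adjoint_inner_right, real_inner_comm (u x)]
  simp
end

section
/- Let E = EuclideanSpace ℝ (Fin n), let F : E → E → E be a map, and let u : E → E be a continuously differentiable vector field (ContDiff ℝ 1 u). Suppose that every integral curve of u solves Newton's equation: for every γ : ℝ → E, every t₀ ∈ ℝ and every open interval I containing t₀, if HasDerivAt γ (u (γ t)) t for all t ∈ I, then HasDerivAt (fun s => u (γ s)) (F (γ t₀) (u (γ t₀))) t₀. Then (fderiv ℝ u x) (u x) = F x (u x) for all x ∈ E. (The 'only if' direction of the Proposition of Section 3, flat-space case: a field solution satisfies condition (7), D_{u_x} = u_* u_x, at every point; the proof uses local existence of integral curves of the C¹ field u through every point.) -/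
/-- The 'only if' direction of the Proposition of Section 3 (flat-space case): if every
integral curve of the C¹ vector field `u` (on any open interval) solves Newton's equation
`x'' = F(x, x')`, then `(fderiv u) u = F(x, u)` at every point. -/
theorem condition_of_intermediate_integral {n : ℕ}
    (F : EuclideanSpace ℝ (Fin n) → EuclideanSpace ℝ (Fin n) → EuclideanSpace ℝ (Fin n))
    (u : EuclideanSpace ℝ (Fin n) → EuclideanSpace ℝ (Fin n)) (hu : ContDiff ℝ 1 u)
    (h : ∀ γ : ℝ → EuclideanSpace ℝ (Fin n), ∀ t₀ a b : ℝ, t₀ ∈ Set.Ioo a b →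
      (∀ t ∈ Set.Ioo a b, HasDerivAt γ (u (γ t)) t) →
      HasDerivAt (fun s => u (γ s)) (F (γ t₀) (u (γ t₀))) t₀) :
    ∀ x, (fderiv ℝ u x) (u x) = F x (u x) := by
  intro x
  obtain ⟨γ, hγ0, ε, hε, hγ⟩ := ContDiffAt.exists_forall_mem_closedBall_exists_eq_forall_mem_Ioo_hasDerivAt₀ (E := EuclideanSpace ℝ (Fin n)) (x₀ := x) hu.contDiffAt 0
  have h0 : (0 : ℝ) ∈ Set.Ioo (0 - ε) (0 + ε) := by constructor <;> simp [hε]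
  have h1 := h γ 0 (0 - ε) (0 + ε) h0 hγ
  have hd : HasDerivAt γ (u (γ 0)) 0 := hγ 0 h0
  have h2 : HasDerivAt (fun s => u (γ s)) ((fderiv ℝ u (γ 0)) (u (γ 0))) 0 :=
    ((hu.differentiable one_ne_zero (γ 0)).hasFDerivAt.comp_hasDerivAt 0 hd)
  rw [hγ0] at h1 h2
  exact h2.unique h1
end
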